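/- arXiv:2605.19443 — 4 statements merged into one kernel-verified Lean document; each statement's English description precedes it below -/
import Mathlib

section
/- Let n ≥ 1 and m ≥ 3 be integers. If g ∈ GL_n(ℤ) has finite order and g ≡ 1 (mod m), i.e., every entry of g − 1 is divisible by m, then g = 1. -/
section aux
variable {n : ℕ}

local notation "M" => Matrix (Fin n) (Fin n) ℤ

private lemma mul_natCast_apply (X : M) (c : ℕ) (i j : Fin n) :
    (X * ((c : ℕ) : M)) i j = X i j * (c : ℤ) := by
  rw [← Matrix.diagonal_natCast, Matrix.mul_diagonal]

private lemma mul_entries_dvd {a b : ℤ} {X Y : M} (hX : ∀ i j, a ∣ X i j)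
    (hY : ∀ i j, b ∣ Y i j) : ∀ i j, a * b ∣ (X * Y) i j := by
  intro i j
  rw [Matrix.mul_apply]
  exact Finset.dvd_sum fun l _ => mul_dvd_mul (hX i l) (hY l j)

private lemma pow_entries_dvd {a : ℤ} {X : M} (hX : ∀ i j, a ∣ X i j) :
    ∀ t i j, a ^ (t + 1) ∣ ((X ^ (t + 1) : M)) i j := by
  intro t
  induction t with
  | zero => simpa using hX
  | succ s ih =>
      intro i j
      rw [pow_succ X, pow_succ a]
      exact mul_entries_dvd ih hX i j

private lemma geom_entries_dvd {a : ℤ} {X : M} (hX : ∀ i j, a ∣ ((X - 1 : M)) i j) :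
    ∀ t i j, a ∣ ((X ^ t - 1 : M)) i j := by
  intro t
  induction t with
  | zero => intro i j; simp
  | succ s ih =>
      intro i j
      have key : (X ^ (s + 1) - 1 : M) = X ^ s * (X - 1) + (X ^ s - 1) := by
        noncomm_ring
      rw [key, Matrix.add_apply]
      refine dvd_add ?_ (ih i j)
      rw [Matrix.mul_apply]
      exact Finset.dvd_sum fun l _ => Dvd.dvd.mul_left (hX l j) _

/-- Key step. -/
private lemma key_step {p q k : ℕ} (hp : p.Prime) (hq : q.Prime) (hk : 1 ≤ k)
    (hkp : k + 2 ≤ k * p) {A : M} (hA : A ^ q = 1)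
    (hdiv : ∀ i j, (p : ℤ) ^ k ∣ ((A - 1 : M)) i j) :
    ∀ i j, (p : ℤ) ^ (k + 1) ∣ ((A - 1 : M)) i j := by
  set C : M := A - 1 with hC
  have hA' : (C + 1) ^ q = 1 := by rw [hC]; simpa using hA
  have hexp : (C + 1) ^ q = ∑ t ∈ Finset.range (q + 1), C ^ t * (q.choose t : M) := by
    rw [(Commute.one_right C).add_pow]
    exact Finset.sum_congr rfl fun t _ => by rw [one_pow, mul_one]
  have hq1 : 1 ≤ q := hq.one_lt.le
  obtain ⟨q', rfl⟩ : ∃ q', q = q' + 1 := ⟨q - 1, by omega⟩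
  rw [hexp, Finset.sum_range_succ'] at hA'
  simp only [pow_zero, Nat.choose_zero_right, Nat.cast_one, one_mul, mul_one] at hA'
  have hA2 : ∑ t ∈ Finset.range (q' + 1), C ^ (t + 1) * ((q' + 1).choose (t + 1) : M) = 0 := by
    have h1 := hA'
    rwa [add_eq_right] at h1
  rw [Finset.sum_range_succ'] at hA2
  simp only [zero_add, pow_one, Nat.choose_one_right] at hA2
  set S : M := ∑ t ∈ Finset.range q', C ^ (t + 1 + 1) * ((q' + 1).choose (t + 1 + 1) : M) with hS
  have hmain : C * ((q' + 1 : ℕ) : M) = -S := eq_neg_of_add_eq_zero_right hA2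
  have hentry : ∀ i j, ((q' + 1 : ℕ) : ℤ) * C i j = -(S i j) := by
    intro i j
    have h1 : (C * ((q' + 1 : ℕ) : M)) i j = -(S i j) := by rw [hmain]; simp
    rw [mul_natCast_apply, mul_comm] at h1
    exact h1
  have hCpow : ∀ t i j, (p : ℤ) ^ (2 * k) ∣ ((C ^ (t + 1 + 1) : M)) i j := by
    intro t i j
    refine dvd_trans (pow_dvd_pow _ ?_) (by
      have := pow_entries_dvd hdiv (t + 1) i j
      rwa [← pow_mul] at this)
    nlinarith
  intro i j
  by_cases hqp : q' + 1 = p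
  · -- case q = p
    have hterm : ∀ t ∈ Finset.range q', ∀ i j,
        (p : ℤ) ^ (k + 2) ∣ (C ^ (t + 1 + 1) * ((q' + 1).choose (t + 1 + 1) : M)) i j := by
      intro t ht i j
      rw [mul_natCast_apply]
      rcases lt_or_eq_of_le (show t + 2 ≤ p by
        simp only [Finset.mem_range] at ht; omega) with hlt | heq
      · -- t + 2 < p : p divides the binomial coefficient
        have hch : (p : ℤ) ∣ ((q' + 1).choose (t + 1 + 1) : ℤ) := by
          rw [hqp]
          exact_mod_cast Int.natCast_dvd_natCast.mpr
            (hp.dvd_choose_self (by omega) (by omega))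
        refine dvd_trans (pow_dvd_pow _ (show k + 2 ≤ 2 * k + 1 by omega)) ?_
        rw [pow_succ]
        exact mul_dvd_mul (hCpow t i j) hch
      · -- t + 2 = p
        refine Dvd.dvd.mul_right ?_ _
        have h1 := pow_entries_dvd hdiv (t + 1) i j
        rw [← pow_mul] at h1
        refine dvd_trans (pow_dvd_pow _ ?_) h1
        calc k + 2 ≤ k * p := hkp
          _ = k * (t + 2) := by rw [heq]
          _ = k * (t + 1 + 1) := by ring
    have hSd : (p : ℤ) ^ (k + 2) ∣ S i j := by
      rw [hS, Matrix.sum_apply]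
      exact Finset.dvd_sum fun t ht => hterm t ht i j
    have h2 : (p : ℤ) ^ (k + 2) ∣ (p : ℤ) * C i j := by
      have := hentry i j
      rw [hqp] at this
      rw [this]
      exact hSd.neg_right
    have hp0 : (p : ℤ) ≠ 0 := by exact_mod_cast hp.ne_zero
    rw [show k + 2 = (k + 1) + 1 by ring, pow_succ'] at h2
    exact (mul_dvd_mul_iff_left hp0).mp h2
  · -- case q ≠ p
    have hSd : (p : ℤ) ^ (k + 1) ∣ S i j := by
      rw [hS, Matrix.sum_apply]
      refine Finset.dvd_sum fun t ht => ?_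
      rw [mul_natCast_apply]
      exact (dvd_trans (pow_dvd_pow _ (by omega : k + 1 ≤ 2 * k)) (hCpow t i j)).mul_right _
    have h2 : (p : ℤ) ^ (k + 1) ∣ ((q' + 1 : ℕ) : ℤ) * C i j := by
      rw [hentry i j]; exact hSd.neg_right
    have hcop : IsCoprime ((p : ℤ) ^ (k + 1)) ((q' + 1 : ℕ) : ℤ) := by
      rw [← Nat.cast_pow]
      rw [Nat.isCoprime_iff_coprime]
      exact (Nat.coprime_primes hp hq).mpr (fun h => hqp h.symm) |>.pow_left _
    rw [mul_comm] at h2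
    exact hcop.dvd_of_dvd_mul_right h2

end aux

/-- Minkowski–Serre: Let `n ≥ 1` and `m ≥ 3`. If `g ∈ GL_n(ℤ)` has finite
order and `g ≡ 1 (mod m)` (every entry of `g - 1` is divisible by `m`), then `g = 1`. -/
theorem stmt5 (n m : ℕ) (hn : 1 ≤ n) (hm : 3 ≤ m)
    (g : Matrix.GeneralLinearGroup (Fin n) ℤ)
    (hfin : IsOfFinOrder g)
    (hdiv : ∀ i j, (m : ℤ) ∣
      ((g : Matrix (Fin n) (Fin n) ℤ) i j - (1 : Matrix (Fin n) (Fin n) ℤ) i j)) :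
    g = 1 := by
  by_contra hne
  -- choose a good prime power p^k dividing m
  obtain ⟨p, k, hp, hk, hkp, hpkm⟩ :
      ∃ p k, p.Prime ∧ 1 ≤ k ∧ k + 2 ≤ k * p ∧ p ^ k ∣ m := by
    rcases Nat.even_or_odd m with he | ho
    · obtain ⟨m', rfl⟩ := he
      rcases Nat.even_or_odd m' with he' | ho'
      · obtain ⟨m'', rfl⟩ := he'
        exact ⟨2, 2, Nat.prime_two, by omega, by omega, ⟨m'', by ring⟩⟩
      · have hm'3 : 3 ≤ m' := by
          rcases ho' with ⟨t, rfl⟩; omega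
        have h1 : m' ≠ 1 := by omega
        have hpf := Nat.minFac_prime h1
        have hdvd : m'.minFac ∣ m' + m' := Dvd.dvd.add m'.minFac_dvd m'.minFac_dvd
        have hne2 : m'.minFac ≠ 2 := by
          intro h2
          have : (2 : ℕ) ∣ m' := h2 ▸ m'.minFac_dvd
          rw [Nat.odd_iff] at ho'
          omega
        exact ⟨m'.minFac, 1, hpf, le_refl 1, by
          have := hpf.two_le; omega, by simpa using hdvd⟩
    · have h1 : m ≠ 1 := by omega
      have hpf := Nat.minFac_prime h1
      have hne2 : m.minFac ≠ 2 := by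
        intro h2
        have : (2 : ℕ) ∣ m := h2 ▸ m.minFac_dvd
        rw [Nat.odd_iff] at ho
        omega
      exact ⟨m.minFac, 1, hpf, le_refl 1, by
        have := hpf.two_le; omega, by simpa using m.minFac_dvd⟩
  -- pass to an element of prime order
  have hN : orderOf g ≠ 0 := hfin.orderOf_pos.ne'
  have hN1 : orderOf g ≠ 1 := fun h => hne (orderOf_eq_one_iff.mp h)
  set N := orderOf g with hNdef
  set r := N.minFac with hrdef
  have hr : r.Prime := Nat.minFac_prime hN1
  set h : Matrix.GeneralLinearGroup (Fin n) ℤ := g ^ (N / r) with hhdef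
  have hordh : orderOf h = r := orderOf_pow_orderOf_div hN N.minFac_dvd
  have hh1 : h ≠ 1 := by
    intro h1
    rw [h1, orderOf_one] at hordh
    exact hr.one_lt.ne' hordh.symm
  -- the underlying matrix
  set A : Matrix (Fin n) (Fin n) ℤ := (h : Matrix (Fin n) (Fin n) ℤ) with hAdef
  have hAr : A ^ r = 1 := by
    have : h ^ r = 1 := by rw [← hordh]; exact pow_orderOf_eq_one h
    calc A ^ r = ((h ^ r : Matrix.GeneralLinearGroup (Fin n) ℤ) :
        Matrix (Fin n) (Fin n) ℤ) := by rw [hAdef]; push_cast; ring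
      _ = 1 := by rw [this]; rfl
  -- congruence for A
  have hdiv' : ∀ i j, (m : ℤ) ∣ ((A - 1 : Matrix (Fin n) (Fin n) ℤ)) i j := by
    intro i j
    have hg : ∀ i j, (m : ℤ) ∣
        (((g : Matrix (Fin n) (Fin n) ℤ) - 1 : Matrix (Fin n) (Fin n) ℤ)) i j := by
      intro i j; simpa [Matrix.sub_apply] using hdiv i j
    have := geom_entries_dvd hg (N / r) i j
    have hcast : ((g : Matrix (Fin n) (Fin n) ℤ) ^ (N / r) : Matrix (Fin n) (Fin n) ℤ) = A := by
      rw [hAdef, hhdef]; push_cast; ring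
    rwa [hcast] at this
  have hdivpk : ∀ i j, (p : ℤ) ^ k ∣ ((A - 1 : Matrix (Fin n) (Fin n) ℤ)) i j := by
    intro i j
    refine dvd_trans ?_ (hdiv' i j)
    exact_mod_cast Int.natCast_dvd_natCast.mpr hpkm
  -- iterate the key step
  have hiter : ∀ t, ∀ i j, (p : ℤ) ^ (k + t) ∣ ((A - 1 : Matrix (Fin n) (Fin n) ℤ)) i j := by
    intro t
    induction t with
    | zero => simpa using hdivpk
    | succ s ih =>
        have hkp' : (k + s) + 2 ≤ (k + s) * p := by
          have h2 : 2 ≤ p := hp.two_le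
          nlinarith
        have := key_step hp hr (by omega) hkp' hAr ih
        intro i j
        have h2 := this i j
        rwa [show k + s + 1 = k + (s + 1) by ring] at h2
  -- conclude each entry of A - 1 is 0
  have hA1 : A = 1 := by
    ext i j
    have hzero : ((A - 1 : Matrix (Fin n) (Fin n) ℤ)) i j = 0 := by
      set a := ((A - 1 : Matrix (Fin n) (Fin n) ℤ)) i j with ha
      refine Int.eq_zero_of_abs_lt_dvd (hiter (a.natAbs + 1) i j) ?_
      have h2 : (2 : ℤ) ≤ (p : ℤ) := by exact_mod_cast hp.two_le
      calc |a| ≤ (a.natAbs : ℤ) := by rw [Int.abs_eq_natAbs]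
        _ < 2 ^ (a.natAbs + 1) := by
          exact_mod_cast lt_of_lt_of_le (Nat.lt_two_pow_self (n := a.natAbs))
            (Nat.pow_le_pow_right (by norm_num) (Nat.le_succ _))
        _ ≤ (p : ℤ) ^ (a.natAbs + 1) := pow_le_pow_left₀ (by norm_num) h2 _
        _ ≤ (p : ℤ) ^ (k + (a.natAbs + 1)) := pow_le_pow_right₀ (by omega) (by omega)
    have := hzero
    rw [Matrix.sub_apply, sub_eq_zero] at this
    exact this
  exact hh1 (Units.ext hA1)
end

section
/- If (V, h) is a finite-dimensional anisotropic hermitian space over K (i.e., h(v, v) = 0 implies v = 0), then the unitary group U(V, h) = {g ∈ GL_K(V) : h(g·x, g·y) = h(x, y) for all x, y} is a compact subgroup of GL_K(V) with its p-adic topology. -/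
/-- Let `K/F` be a quadratic extension of a finite extension `F` of `ℚ_p`
(where `K` carries the `p`-adic topology, encoded by a field norm extending that of `ℚ_p`).
If `(V, h)` is a finite-dimensional anisotropic hermitian space over `K`, then the unitary
group `U(V, h) = {g ∈ GL_K(V) : h (g x) (g y) = h x y}` is a compact subgroup of
`GL_K(V)`, i.e. its image in matrices with respect to any basis is compact. -/
theorem stmt12 (p : ℕ) [Fact p.Prime]
    (F K : Type*) [Field F] [NormedField K]
    [Algebra ℚ_[p] F] [FiniteDimensional ℚ_[p] F]
    [Algebra F K] [FiniteDimensional F K] (hdim : Module.finrank F K = 2)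
    [Algebra ℚ_[p] K] [IsScalarTower ℚ_[p] F K]
    (hnorm : ∀ c : ℚ_[p], ‖algebraMap ℚ_[p] K c‖ = ‖c‖)
    (σ : K ≃ₐ[F] K) (hσ : σ ≠ AlgEquiv.refl)
    (V : Type*) [AddCommGroup V] [Module K V] [FiniteDimensional K V]
    (h : V → V → K)
    (hlin : ∀ (c : K) (x x' y : V), h (c • x + x') y = c * h x y + h x' y)
    (hherm : ∀ x y, h y x = σ (h x y))
    (haniso : ∀ v : V, h v v = 0 → v = 0) :
    ∀ (n : ℕ) (b : Module.Basis (Fin n) K V),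
      IsCompact {M : Matrix (Fin n) (Fin n) K |
        ∃ g : V ≃ₗ[K] V, LinearMap.toMatrix b b (g : V →ₗ[K] V) = M ∧
          ∀ x y : V, h (g x) (g y) = h x y} := by
  intro n b
  classical
  -- basic sesquilinearity facts
  have hzero : ∀ y : V, h 0 y = 0 := by
    intro y
    have h1 := hlin 1 0 0 y
    simp only [one_smul, add_zero, one_mul] at h1
    exact left_eq_add.mp h1
  have hsm : ∀ (c : K) (x y : V), h (c • x) y = c * h x y := by
    intro c x y
    have h1 := hlin c x 0 y
    simpa [hzero] using h1
  have haddl : ∀ (x x' y : V), h (x + x') y = h x y + h x' y := by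
    intro x x' y
    have h1 := hlin 1 x x' y
    simpa using h1
  have hsig : ∀ x y : V, σ (h x y) = h y x := fun x y => (hherm x y).symm
  have hsum1 : ∀ (y : V) (f : Fin n → V), h (∑ i, f i) y = ∑ i, h (f i) y := by
    intro y f
    let L : V →ₗ[K] K :=
      { toFun := fun x => h x y
        map_add' := fun a c => haddl a c y
        map_smul' := fun t a => by simpa using hsm t a y }
    exact map_sum L f Finset.univ
  have hsm2 : ∀ (c : K) (x y : V), h x (c • y) = σ c * h x y := by
    intro c x y
    rw [← hsig, hsm, map_mul, hsig]
  have hexp : ∀ (c d : Fin n → K) (v w : Fin n → V),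
      h (∑ i, c i • v i) (∑ j, d j • w j)
        = ∑ i, ∑ j, c i * σ (d j) * h (v i) (w j) := by
    intro c d v w
    rw [hsum1]
    refine Finset.sum_congr rfl fun i _ => ?_
    have h2 : h (c i • v i) (∑ j, d j • w j) = ∑ j, σ (d j) * h (c i • v i) (w j) := by
      calc h (c i • v i) (∑ j, d j • w j)
          = σ (h (∑ j, d j • w j) (c i • v i)) := (hsig _ _).symm
        _ = ∑ j, σ (h (d j • w j) (c i • v i)) := by rw [hsum1, map_sum]
        _ = ∑ j, σ (d j) * h (c i • v i) (w j) := by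
            refine Finset.sum_congr rfl fun j _ => ?_
            rw [hsm, map_mul, hsig]
    rw [h2]
    refine Finset.sum_congr rfl fun j _ => ?_
    rw [hsm]; ring
  have hsum : ∀ x y : V,
      h x y = ∑ i, ∑ j, b.repr x i * σ (b.repr y j) * h (b i) (b j) := by
    intro x y
    conv_lhs => rw [← b.sum_repr x, ← b.sum_repr y]
    exact hexp _ _ _ _
  -- matrix expansion of the form
  have hA : ∀ (M : Matrix (Fin n) (Fin n) K) (i j : Fin n),
      h (Matrix.toLin b b M (b i)) (Matrix.toLin b b M (b j))
        = ∑ k, ∑ l, M k i * σ (M l j) * h (b k) (b l) := by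
    intro M i j
    rw [Matrix.toLin_self, Matrix.toLin_self]
    exact hexp _ _ _ _
  -- characterization of the unitary set by polynomial equations
  have hset : {M : Matrix (Fin n) (Fin n) K |
        ∃ g : V ≃ₗ[K] V, LinearMap.toMatrix b b (g : V →ₗ[K] V) = M ∧
          ∀ x y : V, h (g x) (g y) = h x y}
      = {M : Matrix (Fin n) (Fin n) K |
          ∀ i j, (∑ k, ∑ l, M k i * σ (M l j) * h (b k) (b l)) = h (b i) (b j)} := by
    ext M
    constructor
    · rintro ⟨g, rfl, hg⟩
      intro i j
      rw [← hA, Matrix.toLin_toMatrix]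
      simpa using hg (b i) (b j)
    · intro hM
      have hpres : ∀ x y : V,
          h (Matrix.toLin b b M x) (Matrix.toLin b b M y) = h x y := by
        intro x y
        have hx : Matrix.toLin b b M x
            = ∑ i, b.repr x i • Matrix.toLin b b M (b i) := by
          conv_lhs => rw [← b.sum_repr x]
          rw [map_sum]
          exact Finset.sum_congr rfl fun i _ => by rw [map_smul]
        have hy : Matrix.toLin b b M y
            = ∑ j, b.repr y j • Matrix.toLin b b M (b j) := by
          conv_lhs => rw [← b.sum_repr y]
          rw [map_sum]
          exact Finset.sum_congr rfl fun j _ => by rw [map_smul]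
        rw [hx, hy, hexp, hsum x y]
        refine Finset.sum_congr rfl fun i _ => Finset.sum_congr rfl fun j _ => ?_
        congr 1
        rw [hA]
        exact hM i j
      have hinj : Function.Injective (Matrix.toLin b b M) := by
        rw [injective_iff_map_eq_zero]
        intro a ha
        apply haniso
        have h1 := hpres a a
        rw [ha, hzero] at h1
        exact h1.symm
      have hbij : Function.Bijective (Matrix.toLin b b M) :=
        ⟨hinj, (LinearMap.injective_iff_surjective).mp hinj⟩
      refine ⟨LinearEquiv.ofBijective _ hbij, ?_, fun x y => hpres x y⟩
      have hco : ((LinearEquiv.ofBijective _ hbij : V ≃ₗ[K] V) : V →ₗ[K] V)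
          = Matrix.toLin b b M := rfl
      rw [hco, LinearMap.toMatrix_toLin]
  rw [hset]
  -- analytic setup
  letI : NormedSpace ℚ_[p] K :=
    { norm_smul_le := fun c x => le_of_eq (by rw [Algebra.smul_def, norm_mul, hnorm]) }
  haveI : FiniteDimensional ℚ_[p] K := FiniteDimensional.trans ℚ_[p] F K
  haveI : ProperSpace K := FiniteDimensional.proper ℚ_[p] K
  have hσcont : Continuous fun x : K => σ x := by
    exact LinearMap.continuous_of_finiteDimensional
      ((σ.toLinearMap : K →ₗ[F] K).restrictScalars ℚ_[p])
  obtain ⟨Cσ, hCσpos, hCσ⟩ :=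
    (LinearMap.toContinuousLinearMap
      ((σ.symm.toLinearMap : K →ₗ[F] K).restrictScalars ℚ_[p])).bound
  have hlow : ∀ c : K, ‖c‖ ≤ Cσ * ‖σ c‖ := by
    intro c
    have h1 := hCσ (σ c)
    have h2 : (LinearMap.toContinuousLinearMap
        ((σ.symm.toLinearMap : K →ₗ[F] K).restrictScalars ℚ_[p])) (σ c) = c := by
      show σ.symm (σ c) = c
      exact σ.symm_apply_apply c
    rw [h2] at h1
    exact h1
  -- case n = 0
  rcases Nat.eq_zero_or_pos n with hn0 | hn
  · subst hn0
    haveI : Subsingleton (Matrix (Fin 0) (Fin 0) K) := by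
      constructor
      intro a a'
      funext i
      exact i.elim0
    exact (Set.toFinite _).isCompact
  -- the quadratic function in coordinates
  set Q : (Fin n → K) → K := fun w => ∑ i, ∑ j, w i * σ (w j) * h (b i) (b j) with hQdef
  have hQval : ∀ w, Q w = h (∑ i, w i • b i) (∑ j, w j • b j) :=
    fun w => (hexp w w b b).symm
  have hQcont : Continuous Q := by
    refine continuous_finset_sum _ fun i _ => continuous_finset_sum _ fun j _ => ?_
    exact ((continuous_apply i).mul (hσcont.comp (continuous_apply j))).mul continuous_const
  have hQzero : ∀ w, Q w = 0 → w = 0 := by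
    intro w hw
    rw [hQval] at hw
    have h1 := haniso _ hw
    have h2 : b.equivFun.symm w = 0 := by
      rw [Module.Basis.equivFun_symm_apply]; exact h1
    have := b.equivFun.symm.injective (by rw [h2, map_zero] : b.equivFun.symm w = b.equivFun.symm 0)
    exact this
  have hQsm : ∀ (c : K) (u : Fin n → K), Q (c • u) = c * σ c * Q u := by
    intro c u
    rw [hQval, hQval]
    have hsc : ∑ i, (c • u) i • b i = c • ∑ i, u i • b i := by
      rw [Finset.smul_sum]
      exact Finset.sum_congr rfl fun i _ => by
        simp [smul_smul]
    rw [hsc, hsm, hsm2]; ring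
  -- compactness of the unit sphere and minimum of ‖Q‖
  have hSphC : IsCompact {w : Fin n → K | ‖w‖ = 1} := by
    have hcl : IsClosed {w : Fin n → K | ‖w‖ = 1} := isClosed_eq continuous_norm continuous_const
    have hsub : {w : Fin n → K | ‖w‖ = 1}
        ⊆ Set.pi Set.univ fun _ : Fin n => Metric.closedBall (0 : K) 1 := by
      intro w hw i _
      simp only [Metric.mem_closedBall, dist_zero_right]
      calc ‖w i‖ ≤ ‖w‖ := norm_le_pi_norm w i
        _ = 1 := hw
    exact ((isCompact_univ_pi fun _ => isCompact_closedBall 0 1)).of_isClosed_subset hcl hsub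
  have hSphNe : {w : Fin n → K | ‖w‖ = 1}.Nonempty := by
    refine ⟨fun _ => 1, ?_⟩
    show ‖(fun _ : Fin n => (1 : K))‖ = 1
    haveI : Nonempty (Fin n) := ⟨⟨0, hn⟩⟩
    rw [pi_norm_const, norm_one]
  obtain ⟨w₀, hw₀S, hw₀min⟩ :=
    hSphC.exists_isMinOn hSphNe (continuous_norm.comp hQcont).continuousOn
  set m := ‖Q w₀‖ with hm
  have hmpos : 0 < m := by
    rw [hm, norm_pos_iff]
    intro h0
    have h1 := hQzero w₀ h0
    have h2 : ‖w₀‖ = 1 := hw₀S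
    rw [h1, norm_zero] at h2
    exact one_ne_zero h2.symm
  -- the key coercivity bound
  have hkey : ∀ w : Fin n → K, ‖w‖ ^ 2 ≤ Cσ / m * ‖Q w‖ := by
    intro w
    rcases eq_or_ne w 0 with rfl | hw
    · have h0 : Q (0 : Fin n → K) = 0 := by
        rw [hQval]; simp [hzero]
      rw [h0, norm_zero, norm_zero]
      simp
    · obtain ⟨i, -, hi⟩ := Finset.exists_max_image Finset.univ (fun i => ‖w i‖)
        ⟨⟨0, hn⟩, Finset.mem_univ _⟩
      have hwi : ‖w‖ = ‖w i‖ := le_antisymm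
        ((pi_norm_le_iff_of_nonneg (norm_nonneg _)).mpr fun j => hi j (Finset.mem_univ j))
        (norm_le_pi_norm w i)
      have hc0 : w i ≠ 0 := by
        intro h0
        apply hw
        have h1 : ‖w‖ = 0 := by rw [hwi, h0, norm_zero]
        exact norm_eq_zero.mp h1
      have hwcu : w = w i • (w i)⁻¹ • w := by
        rw [smul_smul, mul_inv_cancel₀ hc0, one_smul]
      have huS : ((w i)⁻¹ • w) ∈ {w : Fin n → K | ‖w‖ = 1} := by
        show ‖(w i)⁻¹ • w‖ = 1
        rw [norm_smul, norm_inv, hwi]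
        exact inv_mul_cancel₀ (norm_ne_zero_iff.mpr hc0)
      have hQu : m ≤ ‖Q ((w i)⁻¹ • w)‖ := hw₀min huS
      have hQw : ‖Q w‖ = ‖w i‖ * ‖σ (w i)‖ * ‖Q ((w i)⁻¹ • w)‖ := by
        conv_lhs => rw [hwcu]
        rw [hQsm, norm_mul, norm_mul]
      have h2 : ‖w‖ ^ 2 ≤ Cσ * (‖w i‖ * ‖σ (w i)‖) := by
        rw [hwi]
        have h3 := hlow (w i)
        nlinarith [norm_nonneg (w i)]
      have h3 : Cσ * (‖w i‖ * ‖σ (w i)‖) ≤ Cσ / m * ‖Q w‖ := by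
        rw [hQw, div_mul_eq_mul_div, le_div_iff₀ hmpos]
        have hp : 0 ≤ Cσ * (‖w i‖ * ‖σ (w i)‖) * (‖Q ((w i)⁻¹ • w)‖ - m) :=
          mul_nonneg (mul_nonneg hCσpos.le
            (mul_nonneg (norm_nonneg _) (norm_nonneg _))) (sub_nonneg.mpr hQu)
        nlinarith [hp]
      exact h2.trans h3
  -- compact superset
  set R := Real.sqrt (Cσ / m * ∑ j, ‖h (b j) (b j)‖) with hR
  have hsubset : {M : Matrix (Fin n) (Fin n) K |
        ∀ i j, (∑ k, ∑ l, M k i * σ (M l j) * h (b k) (b l)) = h (b i) (b j)}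
      ⊆ Set.pi Set.univ fun _ : Fin n =>
          Set.pi Set.univ fun _ : Fin n => Metric.closedBall (0 : K) R := by
    intro M hM k _ j _
    simp only [Metric.mem_closedBall, dist_zero_right]
    have hQcol : Q (fun l => M l j) = h (b j) (b j) := by
      simp only [hQdef]
      exact hM j j
    have hcolbound : ‖(fun l => M l j)‖ ≤ R := by
      rw [hR]
      have hy : (0 : ℝ) ≤ Cσ / m * ∑ j', ‖h (b j') (b j')‖ :=
        mul_nonneg (div_nonneg hCσpos.le hmpos.le)
          (Finset.sum_nonneg fun _ _ => norm_nonneg _)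
      refine (Real.le_sqrt (norm_nonneg _) hy).mpr ?_
      calc ‖(fun l => M l j)‖ ^ 2 ≤ Cσ / m * ‖Q (fun l => M l j)‖ := hkey _
        _ = Cσ / m * ‖h (b j) (b j)‖ := by rw [hQcol]
        _ ≤ Cσ / m * ∑ j', ‖h (b j') (b j')‖ := by
            refine mul_le_mul_of_nonneg_left ?_ (div_nonneg hCσpos.le hmpos.le)
            exact Finset.single_le_sum (f := fun j' => ‖h (b j') (b j')‖)
              (fun _ _ => norm_nonneg _) (Finset.mem_univ j)
    calc ‖M k j‖ ≤ ‖(fun l => M l j)‖ := norm_le_pi_norm (fun l => M l j) k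
      _ ≤ R := hcolbound
  have hcomp : IsCompact (Set.pi Set.univ fun _ : Fin n =>
      Set.pi Set.univ fun _ : Fin n => Metric.closedBall (0 : K) R) :=
    isCompact_univ_pi fun _ => isCompact_univ_pi fun _ => isCompact_closedBall _ _
  have hclosed : IsClosed {M : Matrix (Fin n) (Fin n) K |
      ∀ i j, (∑ k, ∑ l, M k i * σ (M l j) * h (b k) (b l)) = h (b i) (b j)} := by
    have heq : {M : Matrix (Fin n) (Fin n) K |
        ∀ i j, (∑ k, ∑ l, M k i * σ (M l j) * h (b k) (b l)) = h (b i) (b j)}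
        = ⋂ i, ⋂ j, {M : Matrix (Fin n) (Fin n) K |
            (∑ k, ∑ l, M k i * σ (M l j) * h (b k) (b l)) = h (b i) (b j)} := by
      ext M
      simp [Set.mem_iInter]
    rw [heq]
    refine isClosed_iInter fun i => isClosed_iInter fun j => isClosed_eq ?_ continuous_const
    refine continuous_finset_sum _ fun k _ => continuous_finset_sum _ fun l _ => ?_
    have e1 : Continuous fun M : Matrix (Fin n) (Fin n) K => M k i :=
      continuous_id.matrix_elem k i
    have e2 : Continuous fun M : Matrix (Fin n) (Fin n) K => M l j :=
      continuous_id.matrix_elem l j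
    exact (e1.mul (hσcont.comp e2)).mul continuous_const
  exact hcomp.of_isClosed_subset hclosed hsubset
end

section
/- There is an R-module isomorphism ⋀^n(L ⊗_R M) ≅ L^{⊗n} ⊗_R ⋀^n M determined by sending (ℓ_1 ⊗ m_1) ∧ ⋯ ∧ (ℓ_n ⊗ m_n) to (ℓ_1 ⊗ ⋯ ⊗ ℓ_n) ⊗ (m_1 ∧ ⋯ ∧ m_n). -/
open scoped TensorProduct

/-- For a commutative ring `R`, a free `R`-module `L` of rank 1 and a free
`R`-module `M` of rank `n`, there is an `R`-module isomorphism
`⋀^n (L ⊗ M) ≅ L^{⊗n} ⊗ ⋀^n M` sending `(ℓ₁ ⊗ m₁) ∧ ⋯ ∧ (ℓₙ ⊗ mₙ)` to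
`(ℓ₁ ⊗ ⋯ ⊗ ℓₙ) ⊗ (m₁ ∧ ⋯ ∧ mₙ)`. -/
theorem stmt14 (R : Type*) [CommRing R]
    (L M : Type*) [AddCommGroup L] [Module R L] [AddCommGroup M] [Module R M]
    (n : ℕ) (bL : Module.Basis (Fin 1) R L) (bM : Module.Basis (Fin n) R M) :
    ∃ e : (⋀[R]^n (L ⊗[R] M)) ≃ₗ[R] ((⨂[R]^n L) ⊗[R] (⋀[R]^n M)),
      ∀ (ℓ : Fin n → L) (m : Fin n → M),
        e ⟨ExteriorAlgebra.ιMulti R n (fun i => ℓ i ⊗ₜ[R] m i),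
            ExteriorAlgebra.ιMulti_range R n (Set.mem_range_self _)⟩ =
          (PiTensorProduct.tprod R ℓ) ⊗ₜ[R]
            ⟨ExteriorAlgebra.ιMulti R n m,
              ExteriorAlgebra.ιMulti_range R n (Set.mem_range_self _)⟩ := by
  classical
  -- the coordinate functional on `L`
  set φ : L →ₗ[R] R := bL.coord 0 with hφdef
  have hL : ∀ x : L, φ x • bL 0 = x := by
    intro x
    have := bL.sum_repr x
    simpa [Fin.sum_univ_one, hφdef] using this
  -- the linear equivalence `L ⊗ M ≃ M`
  set ψ : L ⊗[R] M →ₗ[R] M := TensorProduct.lift ((LinearMap.lsmul R M).comp φ) with hψdef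
  set χ : M →ₗ[R] L ⊗[R] M := TensorProduct.mk R L M (bL 0) with hχdef
  have hψ : ∀ (l : L) (m : M), ψ (l ⊗ₜ[R] m) = φ l • m := fun l m => rfl
  have hφb : φ (bL 0) = 1 := by simp [hφdef]
  have hψχ : ψ.comp χ = LinearMap.id := by
    ext m; simp [hχdef, hψ, hφb]
  have hχψ : χ.comp ψ = LinearMap.id := by
    ext l m
    simp only [LinearMap.comp_apply, LinearMap.id_apply, TensorProduct.AlgebraTensorModule.curry_apply,
      TensorProduct.curry_apply, LinearMap.coe_restrictScalars]
    rw [hψ]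
    simp only [hχdef, TensorProduct.mk_apply]
    rw [TensorProduct.tmul_smul, TensorProduct.smul_tmul', hL]
  set e₁ : (L ⊗[R] M) ≃ₗ[R] M := LinearEquiv.ofLinear ψ χ hψχ hχψ with he₁def
  -- the algebra-level equivalence of exterior algebras
  set E : ExteriorAlgebra R (L ⊗[R] M) ≃ₗ[R] ExteriorAlgebra R M :=
    LinearEquiv.ofLinear (ExteriorAlgebra.map (e₁ : L ⊗[R] M →ₗ[R] M)).toLinearMap
      (ExteriorAlgebra.map (e₁.symm : M →ₗ[R] L ⊗[R] M)).toLinearMap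
      (by
        rw [← AlgHom.comp_toLinearMap, ExteriorAlgebra.map_comp_map]
        simp)
      (by
        rw [← AlgHom.comp_toLinearMap, ExteriorAlgebra.map_comp_map]
        simp) with hEdef
  have hE : ∀ x, E x = ExteriorAlgebra.map (e₁ : L ⊗[R] M →ₗ[R] M) x := fun x => rfl
  -- `E` maps `⋀^n (L ⊗ M)` onto `⋀^n M`
  have hmap : (⋀[R]^n (L ⊗[R] M)).map (E : ExteriorAlgebra R (L ⊗[R] M) →ₗ[R] _)
      = ⋀[R]^n M := by
    rw [← ExteriorAlgebra.ιMulti_span_fixedDegree R n (M := L ⊗[R] M),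
      ← ExteriorAlgebra.ιMulti_span_fixedDegree R n (M := M),
      Submodule.map_span]
    congr 1
    ext x
    constructor
    · rintro ⟨y, ⟨v, rfl⟩, rfl⟩
      refine ⟨(e₁ : L ⊗[R] M →ₗ[R] M) ∘ v, ?_⟩
      show _ = E _
      rw [hE, ExteriorAlgebra.map_apply_ιMulti]
    · rintro ⟨v, rfl⟩
      refine ⟨ExteriorAlgebra.ιMulti R n (e₁.symm ∘ v), ⟨_, rfl⟩, ?_⟩
      show E _ = _
      rw [hE, ExteriorAlgebra.map_apply_ιMulti]
      congr 1
      ext i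
      simp
  set eA : (⋀[R]^n (L ⊗[R] M)) ≃ₗ[R] (⋀[R]^n M) :=
    E.ofSubmodules _ _ hmap with heAdef
  -- `⨂^n L ≃ R`
  set θ : (⨂[R]^n L) →ₗ[R] R :=
    PiTensorProduct.lift ((MultilinearMap.mkPiAlgebra R (Fin n) R).compLinearMap fun _ => φ)
    with hθdef
  set χ' : R →ₗ[R] (⨂[R]^n L) := LinearMap.toSpanSingleton R _
    (PiTensorProduct.tprod R fun _ => bL 0) with hχ'def
  have hθt : ∀ v : Fin n → L, θ (PiTensorProduct.tprod R v) = ∏ i, φ (v i) := by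
    intro v; simp [hθdef]
  have htpr : ∀ v : Fin n → L,
      PiTensorProduct.tprod R v = (∏ i, φ (v i)) • PiTensorProduct.tprod R fun _ => bL 0 := by
    intro v
    have : ∀ i, v i = φ (v i) • bL 0 := fun i => (hL (v i)).symm
    conv_lhs => rw [funext this]
    rw [MultilinearMap.map_smul_univ]
  set eT : (⨂[R]^n L) ≃ₗ[R] R := LinearEquiv.ofLinear θ χ'
    (by ext; simp [hχ'def, hθt, hφb])
    (by
      apply PiTensorProduct.ext
      apply MultilinearMap.ext
      intro v
      simp only [LinearMap.compMultilinearMap_apply, LinearMap.comp_apply, hθt,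
        LinearMap.id_apply]
      rw [hχ'def]
      simp only [LinearMap.toSpanSingleton_apply]
      exact (htpr v).symm) with heTdef
  -- final equivalence
  set e₂ : (⋀[R]^n M) ≃ₗ[R] ((⨂[R]^n L) ⊗[R] (⋀[R]^n M)) :=
    (TensorProduct.lid R (⋀[R]^n M)).symm ≪≫ₗ
      (TensorProduct.congr eT.symm (LinearEquiv.refl R _)) with he₂def
  have he₂ : ∀ x : (⋀[R]^n M),
      e₂ x = (PiTensorProduct.tprod R fun _ => bL 0) ⊗ₜ[R] x := by
    intro x
    simp only [he₂def, LinearEquiv.trans_apply, TensorProduct.lid_symm_apply,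
      TensorProduct.congr_tmul, LinearEquiv.refl_apply]
    congr 1
    show χ' 1 = _
    simp [hχ'def]
  refine ⟨eA ≪≫ₗ e₂, fun ℓ m => ?_⟩
  have h1 : eA ⟨ExteriorAlgebra.ιMulti R n (fun i => ℓ i ⊗ₜ[R] m i),
      ExteriorAlgebra.ιMulti_range R n (Set.mem_range_self _)⟩
      = (∏ i, φ (ℓ i)) • ⟨ExteriorAlgebra.ιMulti R n m,
          ExteriorAlgebra.ιMulti_range R n (Set.mem_range_self _)⟩ := by
    apply Subtype.ext
    rw [heAdef]
    simp only [LinearEquiv.ofSubmodules_apply, SetLike.val_smul]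
    rw [hE, ExteriorAlgebra.map_apply_ιMulti]
    have hv : (e₁ : L ⊗[R] M →ₗ[R] M) ∘ (fun i => ℓ i ⊗ₜ[R] m i)
        = fun i => φ (ℓ i) • m i := by
      ext i
      show ψ (ℓ i ⊗ₜ[R] m i) = _
      rw [hψ]
    rw [hv]
    exact MultilinearMap.map_smul_univ _ _ _
  rw [LinearEquiv.trans_apply, h1, map_smul, he₂]
  rw [TensorProduct.smul_tmul', ← htpr]
end

section
/- For every nonzero v_0 ∈ V_0 and x, y ∈ W there is a unique h_W(x, y) ∈ K with h(x(v_0), y(v_0)) = h_W(x, y) · h_0(v_0, v_0), and h_W(x, y) is independent of the choice of v_0 ≠ 0. The resulting form h_W on W = Hom_K(V_0, V) is a nondegenerate hermitian form, and its Gram determinant satisfies det(h_W) = det(h) · h_0(v_0, v_0)^{−2}; in particular, det(h_W) and det(h) have the same class in F×/Nm_{K/F}(K×). -/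
/-- Let `(V₀, h₀)` be a 1-dimensional and `(V, h)` a 2-dimensional
nondegenerate hermitian space over `K`, and `W = Hom_K(V₀, V)`. There is a (unique) form
`h_W` on `W` with `h (x v₀) (y v₀) = h_W x y · h₀ v₀ v₀` for every nonzero `v₀`
(independently of `v₀`); it is a nondegenerate hermitian form, its Gram determinant (for a
basis of `W` matching a basis of `V` via `v₀`) equals `det h · (h₀ v₀ v₀)⁻²`, and in
particular `det h_W` and `det h` have the same class modulo `Nm_{K/F}(K×)`. -/
theorem stmt15
    (F K : Type*) [Field F] [Field K] [Algebra F K]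
    (hchar : (2 : F) ≠ 0)
    [FiniteDimensional F K] (hdim : Module.finrank F K = 2)
    (σ : K ≃ₐ[F] K) (hσ : σ ≠ AlgEquiv.refl)
    (V₀ V : Type*) [AddCommGroup V₀] [Module K V₀] [AddCommGroup V] [Module K V]
    [FiniteDimensional K V₀] [FiniteDimensional K V]
    (hd0 : Module.finrank K V₀ = 1) (hd : Module.finrank K V = 2)
    (h₀ : V₀ → V₀ → K)
    (h₀lin : ∀ (c : K) (x x' y : V₀), h₀ (c • x + x') y = c * h₀ x y + h₀ x' y)
    (h₀herm : ∀ x y, h₀ y x = σ (h₀ x y))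
    (h₀nd : ∀ x : V₀, (∀ y : V₀, h₀ x y = 0) → x = 0)
    (h : V → V → K)
    (hlin : ∀ (c : K) (x x' y : V), h (c • x + x') y = c * h x y + h x' y)
    (hherm : ∀ x y, h y x = σ (h x y))
    (hnd : ∀ x : V, (∀ y : V, h x y = 0) → x = 0) :
    ∃ hW : (V₀ →ₗ[K] V) → (V₀ →ₗ[K] V) → K,
      (∀ v₀ : V₀, v₀ ≠ 0 → ∀ x y, h (x v₀) (y v₀) = hW x y * h₀ v₀ v₀) ∧
      (∀ hW' : (V₀ →ₗ[K] V) → (V₀ →ₗ[K] V) → K,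
        (∃ v₀ : V₀, v₀ ≠ 0 ∧ ∀ x y, h (x v₀) (y v₀) = hW' x y * h₀ v₀ v₀) →
        hW' = hW) ∧
      (∀ (c : K) (x x' y : V₀ →ₗ[K] V), hW (c • x + x') y = c * hW x y + hW x' y) ∧
      (∀ x y, hW y x = σ (hW x y)) ∧
      (∀ x : V₀ →ₗ[K] V, (∀ y, hW x y = 0) → x = 0) ∧
      (∀ v₀ : V₀, v₀ ≠ 0 →
        ∀ (b : Module.Basis (Fin 2) K V) (bW : Module.Basis (Fin 2) K (V₀ →ₗ[K] V)),
          (∀ i, bW i v₀ = b i) →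
          Matrix.det (Matrix.of fun i j => hW (bW i) (bW j)) =
            Matrix.det (Matrix.of fun i j => h (b i) (b j)) * ((h₀ v₀ v₀)⁻¹) ^ 2) ∧
      (∀ (b : Module.Basis (Fin 2) K V) (bW : Module.Basis (Fin 2) K (V₀ →ₗ[K] V)),
        ∃ c : K, c ≠ 0 ∧
          Matrix.det (Matrix.of fun i j => hW (bW i) (bW j)) =
            Matrix.det (Matrix.of fun i j => h (b i) (b j)) * (c * σ c)) := by
  -- Basic consequences of sesquilinearity.
  have h0zero : ∀ y : V₀, h₀ 0 y = 0 := by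
    intro y
    have h2 := h₀lin 1 0 0 y
    simp only [one_smul, add_zero, one_mul] at h2
    linear_combination -h2
  have h0smul : ∀ (c : K) (x y : V₀), h₀ (c • x) y = c * h₀ x y := by
    intro c x y
    have h2 := h₀lin c x 0 y
    simpa [h0zero] using h2
  have h0smul₂ : ∀ (c : K) (x y : V₀), h₀ x (c • y) = σ c * h₀ x y := by
    intro c x y
    rw [h₀herm (c • y) x, h0smul, map_mul, ← h₀herm]
  have hzero : ∀ y : V, h 0 y = 0 := by
    intro y
    have h2 := hlin 1 0 0 y
    simp only [one_smul, add_zero, one_mul] at h2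
    linear_combination -h2
  have hsmul : ∀ (c : K) (x y : V), h (c • x) y = c * h x y := by
    intro c x y
    have h2 := hlin c x 0 y
    simpa [hzero] using h2
  have hadd : ∀ x x' y : V, h (x + x') y = h x y + h x' y := by
    intro x x' y
    have h2 := hlin 1 x x' y
    simpa using h2
  have hsmul₂ : ∀ (c : K) (x y : V), h x (c • y) = σ c * h x y := by
    intro c x y
    rw [hherm (c • y) x, hsmul, map_mul, ← hherm]
  have hadd₂ : ∀ x y y' : V, h x (y + y') = h x y + h x y' := by
    intro x y y'
    rw [hherm (y + y') x, hadd, map_add, ← hherm, ← hherm]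
  have expand : ∀ (a a' cc cc' : K) (u u' w w' : V),
      h (a • u + a' • u') (cc • w + cc' • w') =
        a * σ cc * h u w + a * σ cc' * h u w' + a' * σ cc * h u' w +
          a' * σ cc' * h u' w' := by
    intro a a' cc cc' u u' w w'
    rw [hlin a u (a' • u'), hsmul]
    simp only [hadd₂, hsmul₂]
    ring
  -- a nonzero vector of V₀ and a basis
  have : Nontrivial V₀ := by
    apply Module.nontrivial_of_finrank_pos (R := K)
    omega
  obtain ⟨e, he⟩ := exists_ne (0 : V₀)
  have li : LinearIndependent K ![e] := linearIndependent_unique_iff.mpr (by simpa using he)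
  let B₀ : Module.Basis (Fin 1) K V₀ :=
    basisOfLinearIndependentOfCardEqFinrank li (by simp [hd0])
  have hB₀ : B₀ 0 = e := by
    have := coe_basisOfLinearIndependentOfCardEqFinrank li (by simp [hd0] : Fintype.card (Fin 1) = Module.finrank K V₀)
    simp [B₀, this]
  have hrep : ∀ v : V₀, v = B₀.repr v 0 • e := by
    intro v
    have h2 := B₀.sum_repr v
    rw [Fin.sum_univ_one, hB₀] at h2
    exact h2.symm
  -- x = 0 as soon as x e = 0
  have hext : ∀ x : V₀ →ₗ[K] V, x e = 0 → x = 0 := by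
    intro x hx
    apply B₀.ext
    intro i
    have : i = 0 := Subsingleton.elim i 0
    rw [this, hB₀, hx]
    simp
  -- nonvanishing of h₀ v₀ v₀
  have hdne : ∀ v₀ : V₀, v₀ ≠ 0 → h₀ v₀ v₀ ≠ 0 := by
    intro v₀ hv H
    apply hv
    apply h₀nd
    intro y
    have hy : y = (B₀.repr y 0 * (B₀.repr v₀ 0)⁻¹) • v₀ := by
      have hv0 : B₀.repr v₀ 0 ≠ 0 := by
        intro hc
        apply hv
        rw [hrep v₀, hc, zero_smul]
      calc y = B₀.repr y 0 • e := hrep y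
        _ = (B₀.repr y 0 * (B₀.repr v₀ 0)⁻¹ * B₀.repr v₀ 0) • e := by
            field_simp
        _ = (B₀.repr y 0 * (B₀.repr v₀ 0)⁻¹) • (B₀.repr v₀ 0 • e) := by
            rw [smul_smul]
        _ = (B₀.repr y 0 * (B₀.repr v₀ 0)⁻¹) • v₀ := by rw [← hrep v₀]
    rw [hy, h0smul₂, H, mul_zero]
  set d : K := h₀ e e with hdd
  have hd0' : d ≠ 0 := hdne e he
  have hσd : σ d = d := (h₀herm e e).symm
  have hσdinv : σ d⁻¹ = d⁻¹ := by rw [map_inv₀, hσd]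
  -- the form
  set hW : (V₀ →ₗ[K] V) → (V₀ →ₗ[K] V) → K := fun x y => h (x e) (y e) * d⁻¹ with hWdef
  -- main property
  have Pv : ∀ v₀ : V₀, v₀ ≠ 0 → ∀ x y : V₀ →ₗ[K] V,
      h (x v₀) (y v₀) = hW x y * h₀ v₀ v₀ := by
    intro v₀ hv x y
    set c : K := B₀.repr v₀ 0 with hc
    have hv₀ : v₀ = c • e := hrep v₀
    have hxv : x v₀ = c • x e := by rw [hv₀, map_smul]
    have hyv : y v₀ = c • y e := by rw [hv₀, map_smul]
    have h1 : h (x v₀) (y v₀) = c * (σ c * h (x e) (y e)) := by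
      rw [hxv, hyv, hsmul, hsmul₂]
    have h2 : h₀ v₀ v₀ = c * (σ c * d) := by
      rw [hv₀, h0smul, h0smul₂, hdd]
    rw [h1, h2, hWdef]
    field_simp
  refine ⟨hW, Pv, ?_, ?_, ?_, ?_, ?_, ?_⟩
  · -- uniqueness
    intro hW' ⟨v₀, hv, hP⟩
    funext x y
    have h1 := hP x y
    have h2 := Pv v₀ hv x y
    exact mul_right_cancel₀ (hdne v₀ hv) (h1.symm.trans h2)
  · -- linearity
    intro c x x' y
    simp only [hWdef, LinearMap.add_apply, LinearMap.smul_apply]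
    rw [show (c • x e + x' e : V) = c • x e + x' e from rfl, hlin]
    ring
  · -- hermitian
    intro x y
    simp only [hWdef]
    rw [map_mul, hσdinv, ← hherm]
  · -- nondegenerate
    intro x hx
    apply hext
    apply hnd
    intro w
    have hy : (B₀.constr K ![w]) e = w := by
      have := B₀.constr_basis K ![w] 0
      rwa [hB₀] at this
    have h2 := hx (B₀.constr K ![w])
    simp only [hWdef, hy] at h2
    have := mul_eq_zero.mp h2
    rcases this with h3 | h3
    · exact h3
    · exact absurd h3 (inv_ne_zero hd0')
  · -- determinant for matching bases
    intro v₀ hv b bW hbW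
    have hent : ∀ i j, hW (bW i) (bW j) = h (b i) (b j) * (h₀ v₀ v₀)⁻¹ := by
      intro i j
      have h2 := Pv v₀ hv (bW i) (bW j)
      rw [hbW i, hbW j] at h2
      rw [h2, mul_assoc, mul_inv_cancel₀ (hdne v₀ hv), mul_one]
    simp only [Matrix.det_fin_two, Matrix.of_apply, hent]
    ring
  · -- determinant class for arbitrary bases
    intro b bW
    -- evaluation map at e
    let ev : (V₀ →ₗ[K] V) →ₗ[K] V :=
      { toFun := fun x => x e
        map_add' := fun x y => rfl
        map_smul' := fun c x => rfl }
    have hker : LinearMap.ker ev = ⊥ := by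
      rw [LinearMap.ker_eq_bot']
      intro x hx
      exact hext x hx
    have li2 : LinearIndependent K (ev ∘ ⇑bW) := bW.linearIndependent.map' ev hker
    let b' : Module.Basis (Fin 2) K V :=
      basisOfLinearIndependentOfCardEqFinrank li2 (by simp [hd])
    have hb' : ∀ i, b' i = bW i e := by
      intro i
      have := coe_basisOfLinearIndependentOfCardEqFinrank li2
        (by simp [hd] : Fintype.card (Fin 2) = Module.finrank K V)
      simp [b', this, ev]
    set M : Fin 2 → Fin 2 → K := fun i k => b.repr (bW i e) k with hM
    have hrepV : ∀ i : Fin 2, bW i e = M i 0 • b 0 + M i 1 • b 1 := by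
      intro i
      have h2 := b.sum_repr (bW i e)
      rw [Fin.sum_univ_two] at h2
      exact h2.symm
    set dM : K := M 0 0 * M 1 1 - M 0 1 * M 1 0 with hdM
    have hdMne : dM ≠ 0 := by
      have hu : IsUnit (b.det ⇑b') := b.isUnit_det b'
      have hdet : (b.toMatrix ⇑b').det ≠ 0 := by
        rw [← Module.Basis.det_apply]
        exact hu.ne_zero
      have htrans : (b.toMatrix ⇑b').det = dM := by
        rw [Matrix.det_fin_two, hdM]
        simp only [Module.Basis.toMatrix_apply, hb', hM]
        ring
      rw [← htrans]
      exact hdet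
    refine ⟨dM * d⁻¹, mul_ne_zero hdMne (inv_ne_zero hd0'), ?_⟩
    have hGram : ∀ i j, hW (bW i) (bW j) =
        (M i 0 * σ (M j 0) * h (b 0) (b 0) + M i 0 * σ (M j 1) * h (b 0) (b 1) +
          M i 1 * σ (M j 0) * h (b 1) (b 0) + M i 1 * σ (M j 1) * h (b 1) (b 1)) * d⁻¹ := by
      intro i j
      simp only [hWdef]
      rw [hrepV i, hrepV j, expand]
    have hσc : σ (dM * d⁻¹) =
        (σ (M 0 0) * σ (M 1 1) - σ (M 0 1) * σ (M 1 0)) * d⁻¹ := by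
      rw [map_mul, hσdinv, hdM, map_sub, map_mul, map_mul]
    rw [hσc]
    simp only [Matrix.det_fin_two, Matrix.of_apply, hGram, hdM]
    ring
end
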